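/- Let p be an odd prime and let G be a GGS-group with defining vector e satisfying λ = e_1 + ... + e_{p-1} ≠ 0. Let g ∈ G satisfy g ≡_{G'} a^i b^j with i ≠ 0, and write g = a^i · ψ^{-1}((g_1,...,g_p)). Then g^p ∈ st_G(1), and for every u ∈ X one has φ_u(g^p) ≡_{G'} a^{λj} b^j and |φ_u(g^p)| ≤ |g_1| + ... + |g_p| ≤ |g|. -/

import Mathlib

open List

/-- The automorphism group of the `p`-adic rooted tree: vertices are finite words
over the alphabet `ZMod p` (the letter `i ∈ {1,…,p-1}` is `i` and the letter `p` is `0`),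
and automorphisms are the permutations of the vertex set preserving word length and
the prefix relation. -/
def AutT (p : ℕ) : Subgroup (Equiv.Perm (List (ZMod p))) where
  carrier := {σ | (∀ v, (σ v).length = v.length) ∧
      ∀ u v : List (ZMod p), u <+: v → σ u <+: σ v}
  one_mem' := ⟨fun _ => rfl, fun _ _ h => h⟩
  mul_mem' := by
    rintro σ τ ⟨hσ1, hσ2⟩ ⟨hτ1, hτ2⟩
    refine ⟨fun v => ?_, fun u v h => ?_⟩
    · simp only [Equiv.Perm.mul_apply, hσ1, hτ1]
    · simpa only [Equiv.Perm.mul_apply] using hσ2 _ _ (hτ2 _ _ h)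
  inv_mem' := by
    rintro σ ⟨h1, h2⟩
    have hlen : ∀ v, (σ⁻¹ v).length = v.length := by
      intro v
      have := h1 (σ⁻¹ v)
      rw [show σ (σ⁻¹ v) = v from σ.apply_symm_apply v] at this
      exact this.symm
    refine ⟨hlen, fun u v huv => ?_⟩
    have hle : u.length ≤ (σ⁻¹ v).length := by
      rw [hlen]; exact huv.length_le
    have htake : (σ⁻¹ v).take u.length <+: σ⁻¹ v := List.take_prefix _ _
    have h3 : σ ((σ⁻¹ v).take u.length) <+: v := by
      have := h2 _ _ htake
      rwa [show σ (σ⁻¹ v) = v from σ.apply_symm_apply v] at this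
    have hlen2 : (σ ((σ⁻¹ v).take u.length)).length = u.length := by
      rw [h1, List.length_take]
      omega
    have heq : σ ((σ⁻¹ v).take u.length) = u := by
      refine List.IsPrefix.eq_of_length ?_ (by rw [hlen2])
      exact List.prefix_of_prefix_length_le h3 huv (by rw [hlen2])
    have h4 : σ⁻¹ u = (σ⁻¹ v).take u.length := by
      conv_lhs => rw [← heq]
      exact Equiv.symm_apply_apply _ _
    rw [h4]; exact htake

lemma mem_AutT_iff {p : ℕ} {σ : Equiv.Perm (List (ZMod p))} :
    σ ∈ AutT p ↔ (∀ v, (σ v).length = v.length) ∧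
      ∀ u v : List (ZMod p), u <+: v → σ u <+: σ v := Iff.rfl

lemma autT_apply_append (p : ℕ) (f : Equiv.Perm (List (ZMod p))) (hf : f ∈ AutT p)
    (u v : List (ZMod p)) : f (u ++ v) = f u ++ (f (u ++ v)).drop u.length := by
  rw [mem_AutT_iff] at hf
  have hpre : f u <+: f (u ++ v) := hf.2 u (u ++ v) ⟨v, rfl⟩
  have := List.prefix_iff_eq_append.mp hpre
  rw [hf.1 u] at this
  exact this.symm

/-- The section (state) of a tree automorphism at the vertex `u`, as a permutation of
the subtree rooted at `u` (identified with the whole tree). -/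
def secEquiv (p : ℕ) (f : ↥(AutT p)) (u : List (ZMod p)) : Equiv.Perm (List (ZMod p)) where
  toFun v := ((f : Equiv.Perm (List (ZMod p))) (u ++ v)).drop u.length
  invFun v := (((f⁻¹ : ↥(AutT p)) : Equiv.Perm (List (ZMod p)))
      (((f : Equiv.Perm (List (ZMod p))) u) ++ v)).drop u.length
  left_inv v := by
    dsimp only
    have key := autT_apply_append p (f : Equiv.Perm (List (ZMod p))) f.2 u v
    rw [← key]
    have h1 : ((f⁻¹ : ↥(AutT p)) : Equiv.Perm (List (ZMod p)))
        ((f : Equiv.Perm (List (ZMod p))) (u ++ v)) = u ++ v := by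
      rw [InvMemClass.coe_inv]
      exact Equiv.symm_apply_apply _ _
    rw [h1, List.drop_left]
  right_inv v := by
    dsimp only
    have hg := (f⁻¹ : ↥(AutT p)).2
    rw [mem_AutT_iff] at hg
    have h1 : ((f⁻¹ : ↥(AutT p)) : Equiv.Perm (List (ZMod p)))
        ((f : Equiv.Perm (List (ZMod p))) u) = u := by
      rw [InvMemClass.coe_inv]
      exact Equiv.symm_apply_apply _ _
    have hpre : u <+: ((f⁻¹ : ↥(AutT p)) : Equiv.Perm (List (ZMod p)))
        (((f : Equiv.Perm (List (ZMod p))) u) ++ v) := by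
      have := hg.2 ((f : Equiv.Perm (List (ZMod p))) u)
        (((f : Equiv.Perm (List (ZMod p))) u) ++ v) ⟨v, rfl⟩
      rwa [h1] at this
    have hw := List.prefix_iff_eq_append.mp hpre
    rw [hw]
    have h2 : (f : Equiv.Perm (List (ZMod p)))
        (((f⁻¹ : ↥(AutT p)) : Equiv.Perm (List (ZMod p)))
          (((f : Equiv.Perm (List (ZMod p))) u) ++ v))
        = ((f : Equiv.Perm (List (ZMod p))) u) ++ v := by
      rw [InvMemClass.coe_inv]
      exact Equiv.apply_symm_apply _ _
    rw [h2]
    have hlu : ((f : Equiv.Perm (List (ZMod p))) u).length = u.length :=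
      ((mem_AutT_iff).mp f.2).1 u
    rw [← hlu, List.drop_left]

lemma secEquiv_mem (p : ℕ) (f : ↥(AutT p)) (u : List (ZMod p)) :
    secEquiv p f u ∈ AutT p := by
  rw [mem_AutT_iff]
  obtain ⟨h1, h2⟩ := (mem_AutT_iff).mp f.2
  constructor
  · intro v
    show (((f : Equiv.Perm (List (ZMod p))) (u ++ v)).drop u.length).length = v.length
    rw [List.length_drop, h1, List.length_append]
    omega
  · intro v w hvw
    show ((f : Equiv.Perm (List (ZMod p))) (u ++ v)).drop u.length <+:
      ((f : Equiv.Perm (List (ZMod p))) (u ++ w)).drop u.length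
    have hp : (f : Equiv.Perm (List (ZMod p))) (u ++ v) <+:
        (f : Equiv.Perm (List (ZMod p))) (u ++ w) := by
      apply h2
      obtain ⟨t, rfl⟩ := hvw
      exact ⟨t, by rw [List.append_assoc]⟩
    obtain ⟨t, ht⟩ := hp
    have hle : u.length ≤ ((f : Equiv.Perm (List (ZMod p))) (u ++ v)).length := by
      rw [h1, List.length_append]; omega
    exact ⟨t, by rw [← List.drop_append_of_le_length hle, ht]⟩

/-- `sectionAt p f u = φ_u(f)`, the section of `f` at vertex `u`, as a tree automorphism. -/
def sectionAt (p : ℕ) (f : ↥(AutT p)) (u : List (ZMod p)) : ↥(AutT p) :=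
  ⟨secEquiv p f u, secEquiv_mem p f u⟩

/-- Add `k` to the first letter of a word (identity on the empty word). -/
def addFirst (p : ℕ) (k : ZMod p) : List (ZMod p) → List (ZMod p)
  | [] => []
  | x :: v => (x + k) :: v

lemma addFirst_addFirst (p : ℕ) (k l : ZMod p) (v : List (ZMod p)) :
    addFirst p k (addFirst p l v) = addFirst p (l + k) v := by
  cases v with
  | nil => rfl
  | cons x w => show (x + l + k) :: w = (x + (l + k)) :: w; rw [add_assoc]

lemma addFirst_zero (p : ℕ) (v : List (ZMod p)) : addFirst p 0 v = v := by
  cases v with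
  | nil => rfl
  | cons x w => show (x + 0) :: w = x :: w; rw [add_zero]

lemma addFirst_length (p : ℕ) (k : ZMod p) (v : List (ZMod p)) :
    (addFirst p k v).length = v.length := by
  cases v <;> rfl

/-- The rooted automorphism corresponding to the `p`-cycle `(1 2 ⋯ p)`:
it adds `1` to the first letter of every nonempty word. -/
def aPerm (p : ℕ) : Equiv.Perm (List (ZMod p)) where
  toFun := addFirst p 1
  invFun := addFirst p (-1)
  left_inv v := by rw [addFirst_addFirst, add_neg_cancel, addFirst_zero]
  right_inv v := by rw [addFirst_addFirst, neg_add_cancel, addFirst_zero]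

lemma addFirst_prefix (p : ℕ) (k : ZMod p) (u t : List (ZMod p)) :
    addFirst p k u <+: addFirst p k (u ++ t) := by
  cases u with
  | nil => exact List.nil_prefix
  | cons x w => exact ⟨t, rfl⟩

lemma aPerm_mem (p : ℕ) : aPerm p ∈ AutT p := by
  rw [mem_AutT_iff]
  refine ⟨fun v => addFirst_length p 1 v, ?_⟩
  rintro u v ⟨t, rfl⟩
  exact addFirst_prefix p 1 u t

/-- The rooted generator `a` of a GGS-group. -/
def aA (p : ℕ) : ↥(AutT p) := ⟨aPerm p, aPerm_mem p⟩

/-- The underlying function of the directed automorphism `b` with defining vector `e`. -/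
def bFun (p : ℕ) [NeZero p] (e : Fin (p - 1) → ZMod p) : List (ZMod p) → List (ZMod p)
  | [] => []
  | x :: v =>
    if h : x.val = 0 then x :: bFun p e v
    else x :: addFirst p (e ⟨x.val - 1, by have := ZMod.val_lt x; omega⟩) v

lemma bFun_cons (p : ℕ) [NeZero p] (e : Fin (p - 1) → ZMod p) (x : ZMod p)
    (v : List (ZMod p)) :
    bFun p e (x :: v) = if h : x.val = 0 then x :: bFun p e v
      else x :: addFirst p (e ⟨x.val - 1, by have := ZMod.val_lt x; omega⟩) v := rfl

lemma bFun_bFun (p : ℕ) [NeZero p] (e f : Fin (p - 1) → ZMod p)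
    (h : ∀ j, e j + f j = 0) (v : List (ZMod p)) : bFun p f (bFun p e v) = v := by
  induction v with
  | nil => rfl
  | cons x w ih =>
    by_cases hx : x.val = 0
    · rw [bFun_cons, dif_pos hx, bFun_cons, dif_pos hx, ih]
    · rw [bFun_cons, dif_neg hx, bFun_cons, dif_neg hx, addFirst_addFirst, h, addFirst_zero]

/-- The directed automorphism `b` with defining vector `e`, as a permutation:
`ψ(b) = (a^{e_1}, …, a^{e_{p-1}}, b)`. -/
def bPerm (p : ℕ) [NeZero p] (e : Fin (p - 1) → ZMod p) : Equiv.Perm (List (ZMod p)) where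
  toFun := bFun p e
  invFun := bFun p (fun j => -e j)
  left_inv v := bFun_bFun p e _ (fun j => add_neg_cancel _) v
  right_inv v := bFun_bFun p _ e (fun j => neg_add_cancel _) v

lemma bFun_length (p : ℕ) [NeZero p] (e : Fin (p - 1) → ZMod p) (v : List (ZMod p)) :
    (bFun p e v).length = v.length := by
  induction v with
  | nil => rfl
  | cons x w ih =>
    by_cases hx : x.val = 0
    · rw [bFun_cons, dif_pos hx]; simpa using ih
    · rw [bFun_cons, dif_neg hx]; simp [addFirst_length]

lemma bPerm_mem (p : ℕ) [NeZero p] (e : Fin (p - 1) → ZMod p) : bPerm p e ∈ AutT p := by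
  rw [mem_AutT_iff]
  refine ⟨fun v => bFun_length p e v, ?_⟩
  rintro u v ⟨t, rfl⟩
  show bFun p e u <+: bFun p e (u ++ t)
  induction u with
  | nil => exact List.nil_prefix
  | cons x w ih =>
    by_cases hx : x.val = 0
    · rw [List.cons_append, bFun_cons, dif_pos hx, bFun_cons, dif_pos hx]
      exact List.cons_prefix_cons.mpr ⟨rfl, ih⟩
    · rw [List.cons_append, bFun_cons, dif_neg hx, bFun_cons, dif_neg hx]
      exact List.cons_prefix_cons.mpr ⟨rfl, addFirst_prefix p _ w t⟩

/-- The directed generator `b` of the GGS-group with defining vector `e`. -/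
def bA (p : ℕ) [NeZero p] (e : Fin (p - 1) → ZMod p) : ↥(AutT p) :=
  ⟨bPerm p e, bPerm_mem p e⟩

/-- The GGS-group `G = ⟨a, b⟩ ≤ Aut T` with defining vector `e`. -/
def GGS (p : ℕ) [NeZero p] (e : Fin (p - 1) → ZMod p) : Subgroup ↥(AutT p) :=
  Subgroup.closure {aA p, bA p e}

lemma aA_mem_GGS (p : ℕ) [NeZero p] (e : Fin (p - 1) → ZMod p) : aA p ∈ GGS p e :=
  Subgroup.subset_closure (Set.mem_insert _ _)

lemma bA_mem_GGS (p : ℕ) [NeZero p] (e : Fin (p - 1) → ZMod p) : bA p e ∈ GGS p e :=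
  Subgroup.subset_closure (Set.mem_insert_of_mem _ rfl)

/-- `a^n` for an exponent `n ∈ F_p`. -/
def aZ (p : ℕ) (n : ZMod p) : ↥(AutT p) := aA p ^ n.val

/-- `b^m` for an exponent `m ∈ F_p`. -/
def bZ (p : ℕ) [NeZero p] (e : Fin (p - 1) → ZMod p) (m : ZMod p) : ↥(AutT p) :=
  bA p e ^ m.val

/-- The length `|g|` of an element of the GGS-group with defining vector `e`:
the minimal number `m` of `b`-syllables in an expression
`g = a^{α_1} b^{β_1} a^{α_2} ⋯ b^{β_m} a^{α_{m+1}}`. -/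
noncomputable def glen (p : ℕ) [NeZero p] (e : Fin (p - 1) → ZMod p) (g : ↥(AutT p)) : ℕ :=
  sInf {m : ℕ | ∃ (α : Fin (m + 1) → ZMod p) (β : Fin m → ZMod p),
    g = aZ p (α 0) * (List.ofFn fun i : Fin m => bZ p e (β i) * aZ p (α i.succ)).prod}

/-- An element of `Aut T` fixes all first-level vertices, i.e. lies in `st(1)`. -/
def FixesLevelOne (p : ℕ) (f : ↥(AutT p)) : Prop :=
  ∀ x : ZMod p, (f : Equiv.Perm (List (ZMod p))) [x] = [x]

section Aux

set_option linter.unusedSectionVars false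

variable {p : ℕ} [Fact p.Prime] {e : Fin (p - 1) → ZMod p}

lemma coe_mul_apply (f g : ↥(AutT p)) (v : List (ZMod p)) :
    ((f * g : ↥(AutT p)) : Equiv.Perm (List (ZMod p))) v
      = (f : Equiv.Perm (List (ZMod p))) ((g : Equiv.Perm (List (ZMod p))) v) := rfl

lemma autT_one_apply (v : List (ZMod p)) :
    ((1 : ↥(AutT p)) : Equiv.Perm (List (ZMod p))) v = v := rfl

lemma bA_apply (v : List (ZMod p)) :
    ((bA p e : ↥(AutT p)) : Equiv.Perm (List (ZMod p))) v = bFun p e v := rfl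

lemma aA_pow_apply (n : ℕ) : ∀ v : List (ZMod p),
    ((aA p ^ n : ↥(AutT p)) : Equiv.Perm (List (ZMod p))) v = addFirst p (n : ZMod p) v := by
  induction n with
  | zero => intro v; simp [addFirst_zero]
  | succ n ih =>
    intro v
    rw [pow_succ, coe_mul_apply]
    show ((aA p ^ n : ↥(AutT p)) : Equiv.Perm (List (ZMod p))) (addFirst p 1 v) = _
    rw [ih, addFirst_addFirst]
    push_cast
    ring_nf

lemma aA_pow_p : (aA p : ↥(AutT p)) ^ p = 1 := by
  apply Subtype.ext
  apply Equiv.ext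
  intro v
  show ((aA p ^ p : ↥(AutT p)) : Equiv.Perm (List (ZMod p))) v = _
  rw [aA_pow_apply]
  simp [ZMod.natCast_self, addFirst_zero]

lemma aZ_apply (c : ZMod p) (v : List (ZMod p)) :
    ((aZ p c : ↥(AutT p)) : Equiv.Perm (List (ZMod p))) v = addFirst p c v := by
  rw [aZ, aA_pow_apply, ZMod.natCast_val, ZMod.cast_id]

lemma aZ_add (c d : ZMod p) : aZ p (c + d) = aZ p c * aZ p d := by
  rw [aZ, aZ, aZ, ← pow_add, pow_eq_pow_mod ((c+d).val) aA_pow_p,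
    pow_eq_pow_mod (c.val + d.val) aA_pow_p, ZMod.val_add, Nat.mod_mod_of_dvd _ dvd_rfl]

lemma aZ_zero : aZ p 0 = 1 := by rw [aZ, ZMod.val_zero, pow_zero]

lemma aZ_neg (c : ZMod p) : aZ p (-c) = (aZ p c)⁻¹ := by
  rw [eq_inv_iff_mul_eq_one, ← aZ_add, neg_add_cancel, aZ_zero]

/-- The index in the defining vector corresponding to a nonzero letter. -/
def eIdx {p : ℕ} [NeZero p] (x : ZMod p) (hx : x.val ≠ 0) : Fin (p - 1) :=
  ⟨x.val - 1, by have := ZMod.val_lt x; omega⟩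

lemma bFun_cons_ne (x : ZMod p) (hx : x.val ≠ 0) (v : List (ZMod p)) :
    bFun p e (x :: v) = x :: addFirst p (e (eIdx x hx)) v := by
  rw [bFun_cons, dif_neg hx]
  rfl

lemma bA_pow_apply_cons (n : ℕ) (x : ZMod p) (w : List (ZMod p)) :
    ((bA p e ^ n : ↥(AutT p)) : Equiv.Perm (List (ZMod p))) (x :: w)
      = if hx : x.val = 0 then x :: ((bA p e ^ n : ↥(AutT p)) : Equiv.Perm (List (ZMod p))) w
        else x :: addFirst p ((n : ZMod p) * e (eIdx x hx)) w := by
  induction n with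
  | zero =>
    by_cases hx : x.val = 0
    · rw [dif_pos hx]; rfl
    · rw [dif_neg hx]
      simp only [pow_zero, autT_one_apply, Nat.cast_zero, zero_mul, addFirst_zero]
  | succ n ih =>
    rw [pow_succ', coe_mul_apply, ih]
    by_cases hx : x.val = 0
    · rw [dif_pos hx, dif_pos hx, bA_apply, bFun_cons, dif_pos hx, coe_mul_apply, bA_apply]
    · rw [dif_neg hx, dif_neg hx, bA_apply, bFun_cons_ne x hx, addFirst_addFirst]
      congr 2
      push_cast
      ring

lemma bA_pow_nil (n : ℕ) :
    ((bA p e ^ n : ↥(AutT p)) : Equiv.Perm (List (ZMod p))) [] = [] := by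
  induction n with
  | zero => rfl
  | succ n ih => rw [pow_succ', coe_mul_apply, ih]; rfl

lemma bA_pow_p : (bA p e : ↥(AutT p)) ^ p = 1 := by
  apply Subtype.ext
  apply Equiv.ext
  intro v
  show ((bA p e ^ p : ↥(AutT p)) : Equiv.Perm (List (ZMod p))) v = _
  rw [autT_one_apply]
  induction v with
  | nil => exact bA_pow_nil p
  | cons x w ih =>
    rw [bA_pow_apply_cons]
    by_cases hx : x.val = 0
    · rw [dif_pos hx, ih]
    · rw [dif_neg hx, ZMod.natCast_self, zero_mul, addFirst_zero]

lemma bZ_add (c d : ZMod p) : bZ p e (c + d) = bZ p e c * bZ p e d := by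
  rw [bZ, bZ, bZ, ← pow_add, pow_eq_pow_mod ((c+d).val) bA_pow_p,
    pow_eq_pow_mod (c.val + d.val) bA_pow_p, ZMod.val_add, Nat.mod_mod_of_dvd _ dvd_rfl]

lemma bZ_zero : bZ p e 0 = 1 := by rw [bZ, ZMod.val_zero, pow_zero]

lemma bZ_neg (c : ZMod p) : bZ p e (-c) = (bZ p e c)⁻¹ := by
  rw [eq_inv_iff_mul_eq_one, ← bZ_add, neg_add_cancel, bZ_zero]

lemma aZ_one : aZ p 1 = aA p := by
  rw [aZ, ZMod.val_one, pow_one]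

lemma bZ_one : bZ p e 1 = bA p e := by
  rw [bZ, ZMod.val_one, pow_one]

lemma aZ_mem (c : ZMod p) : aZ p c ∈ GGS p e := pow_mem (aA_mem_GGS p e) _

lemma bZ_mem (c : ZMod p) : bZ p e c ∈ GGS p e := pow_mem (bA_mem_GGS p e) _

end Aux
section Aux2

set_option linter.unusedSectionVars false

variable {p : ℕ} [Fact p.Prime] {e : Fin (p - 1) → ZMod p}

/-- `f` shifts the first letter of every word of length 1 by `c`. -/
def HasShift (f : ↥(AutT p)) (c : ZMod p) : Prop :=
  ∀ x : ZMod p, (f : Equiv.Perm (List (ZMod p))) [x] = [x + c]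

lemma hasShift_one : HasShift (1 : ↥(AutT p)) 0 := by
  intro x; rw [autT_one_apply, add_zero]

lemma hasShift_mul {f g : ↥(AutT p)} {c d : ZMod p} (hf : HasShift f c) (hg : HasShift g d) :
    HasShift (f * g) (c + d) := by
  intro x
  rw [coe_mul_apply, hg, hf]
  congr 1
  ring

lemma hasShift_inv {f : ↥(AutT p)} {c : ZMod p} (hf : HasShift f c) : HasShift f⁻¹ (-c) := by
  intro x
  have := hf (x + -c)
  rw [add_assoc, neg_add_cancel, add_zero] at this
  rw [← this, InvMemClass.coe_inv]; exact Equiv.symm_apply_apply _ _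

lemma hasShift_unique {f : ↥(AutT p)} {c d : ZMod p} (h1 : HasShift f c) (h2 : HasShift f d) :
    c = d := by
  have := (h1 0).symm.trans (h2 0)
  simpa using this

lemma hasShift_aZ (c : ZMod p) : HasShift (aZ p c) c := by
  intro x
  rw [aZ_apply]
  rfl

lemma hasShift_bZ (c : ZMod p) : HasShift (bZ p e c) 0 := by
  intro x
  rw [bZ, bA_pow_apply_cons]
  by_cases hx : x.val = 0
  · rw [dif_pos hx, bA_pow_nil, add_zero]
  · rw [dif_neg hx, add_zero]
    congr 1

lemma hasShift_pow {f : ↥(AutT p)} {c : ZMod p} (hf : HasShift f c) (n : ℕ) :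
    HasShift (f ^ n) (n • c) := by
  induction n with
  | zero => simpa using hasShift_one
  | succ n ih =>
    have := hasShift_mul hf ih
    rw [← pow_succ'] at this
    convert this using 1
    push_cast
    ring

/-- The first-letter shift of `f`. -/
def sh (f : ↥(AutT p)) : ZMod p :=
  ((f : Equiv.Perm (List (ZMod p))) [0]).headI

lemma sh_eq {f : ↥(AutT p)} {c : ZMod p} (hf : HasShift f c) : sh f = c := by
  rw [sh, hf 0, zero_add]
  rfl

/-- `Good1 f` : `f` has a well-defined first-letter shift. -/
def Good1 (f : ↥(AutT p)) : Prop := ∃ c, HasShift f c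

lemma good1_shift {f : ↥(AutT p)} (hf : Good1 f) : HasShift f (sh f) := by
  obtain ⟨c, hc⟩ := hf
  rwa [sh_eq hc]

lemma sh_mul {f g : ↥(AutT p)} (hf : Good1 f) (hg : Good1 g) : sh (f * g) = sh f + sh g :=
  sh_eq (hasShift_mul (good1_shift hf) (good1_shift hg))

/-- The section of `f` at the first-level vertex `x`. -/
def sec (f : ↥(AutT p)) (x : ZMod p) : ↥(AutT p) := sectionAt p f [x]

lemma sec_apply (f : ↥(AutT p)) (x : ZMod p) (v : List (ZMod p)) :
    ((sec f x : ↥(AutT p)) : Equiv.Perm (List (ZMod p))) v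
      = ((f : Equiv.Perm (List (ZMod p))) (x :: v)).drop 1 := rfl

lemma sec_mul (f : ↥(AutT p)) {g : ↥(AutT p)} {d : ZMod p} (hg : HasShift g d) (x : ZMod p) :
    sec (f * g) x = sec f (x + d) * sec g x := by
  apply Subtype.ext
  apply Equiv.ext
  intro v
  rw [coe_mul_apply, sec_apply, sec_apply, coe_mul_apply]
  have hgsplit : (g : Equiv.Perm (List (ZMod p))) (x :: v)
      = (x + d) :: ((g : Equiv.Perm (List (ZMod p))) (x :: v)).drop 1 := by
    have := autT_apply_append p (g : Equiv.Perm (List (ZMod p))) g.2 [x] v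
    rw [hg x] at this
    simpa using this
  rw [hgsplit]
  have hfsplit : (f : Equiv.Perm (List (ZMod p)))
      ((x + d) :: ((g : Equiv.Perm (List (ZMod p))) (x :: v)).drop 1)
      = (f : Equiv.Perm (List (ZMod p))) [x + d]
        ++ ((f : Equiv.Perm (List (ZMod p)))
          ((x + d) :: ((g : Equiv.Perm (List (ZMod p))) (x :: v)).drop 1)).drop 1 := by
    have := autT_apply_append p (f : Equiv.Perm (List (ZMod p))) f.2 [x + d]
      (((g : Equiv.Perm (List (ZMod p))) (x :: v)).drop 1)
    simpa using this
  rw [hfsplit, sec_apply]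
  have : ((f : Equiv.Perm (List (ZMod p))) [x + d]).length = 1 := f.2.1 [x + d]
  rw [List.drop_append_of_le_length (le_of_eq this.symm), List.drop_eq_nil_of_le (le_of_eq this),
    List.nil_append]

lemma sec_one (x : ZMod p) : sec (1 : ↥(AutT p)) x = 1 := by
  apply Subtype.ext; apply Equiv.ext; intro v
  rw [sec_apply, autT_one_apply, autT_one_apply]
  rfl

lemma sec_aZ (c : ZMod p) (x : ZMod p) : sec (aZ p c) x = 1 := by
  apply Subtype.ext; apply Equiv.ext; intro v
  rw [sec_apply, aZ_apply, autT_one_apply]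
  rfl

lemma sec_bZ (β : ZMod p) (x : ZMod p) :
    sec (bZ p e β) x = if hx : x.val = 0 then bZ p e β else aZ p (β * e (eIdx x hx)) := by
  apply Subtype.ext; apply Equiv.ext; intro v
  rw [sec_apply]
  show (((bA p e ^ β.val : ↥(AutT p)) : Equiv.Perm (List (ZMod p))) (x :: v)).drop 1 = _
  rw [bA_pow_apply_cons]
  by_cases hx : x.val = 0
  · rw [dif_pos hx, dif_pos hx]
    rfl
  · rw [dif_neg hx, dif_neg hx, aZ_apply]
    show addFirst p ((β.val : ZMod p) * e (eIdx x hx)) v = _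
    rw [ZMod.natCast_val, ZMod.cast_id]

lemma sec_inv {g : ↥(AutT p)} {d : ZMod p} (hg : HasShift g d) (x : ZMod p) :
    sec g⁻¹ x = (sec g (x + -d))⁻¹ := by
  have h1 : sec (g⁻¹ * g) (x + -d) = sec g⁻¹ (x + -d + d) * sec g (x + -d) :=
    sec_mul _ hg _
  rw [inv_mul_cancel, sec_one, add_assoc, neg_add_cancel, add_zero] at h1
  rw [eq_inv_iff_mul_eq_one, ← h1]

end Aux2
section Aux3

set_option linter.unusedSectionVars false

variable {p : ℕ} [Fact p.Prime] {e : Fin (p - 1) → ZMod p}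

/-- Elements with well-defined shifts for themselves and their first-level sections. -/
def SG2 (p : ℕ) [Fact p.Prime] : Subgroup ↥(AutT p) where
  carrier := {f | Good1 f ∧ ∀ x, Good1 (sec f x)}
  one_mem' := ⟨⟨0, hasShift_one⟩, fun x => by rw [sec_one]; exact ⟨0, hasShift_one⟩⟩
  mul_mem' := by
    rintro f g ⟨hf1, hf2⟩ ⟨hg1, hg2⟩
    refine ⟨⟨sh f + sh g, hasShift_mul (good1_shift hf1) (good1_shift hg1)⟩, fun x => ?_⟩
    rw [sec_mul f (good1_shift hg1) x]
    obtain ⟨c1, h1⟩ := hf2 (x + sh g)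
    obtain ⟨c2, h2⟩ := hg2 x
    exact ⟨c1 + c2, hasShift_mul h1 h2⟩
  inv_mem' := by
    rintro f ⟨hf1, hf2⟩
    refine ⟨⟨-sh f, hasShift_inv (good1_shift hf1)⟩, fun x => ?_⟩
    rw [sec_inv (good1_shift hf1) x]
    obtain ⟨c1, h1⟩ := hf2 (x + -sh f)
    exact ⟨-c1, hasShift_inv h1⟩

lemma mem_SG2_iff {f : ↥(AutT p)} :
    f ∈ SG2 p ↔ Good1 f ∧ ∀ x, Good1 (sec f x) := Iff.rfl

lemma aA_mem_SG2 : aA p ∈ SG2 p := by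
  rw [mem_SG2_iff, ← aZ_one]
  exact ⟨⟨1, hasShift_aZ 1⟩, fun x => by rw [sec_aZ]; exact ⟨0, hasShift_one⟩⟩

lemma bA_mem_SG2 : bA p e ∈ SG2 p := by
  rw [mem_SG2_iff, ← bZ_one (e := e)]
  refine ⟨⟨0, hasShift_bZ 1⟩, fun x => ?_⟩
  rw [sec_bZ]
  by_cases hx : x.val = 0
  · rw [dif_pos hx]; exact ⟨0, hasShift_bZ 1⟩
  · rw [dif_neg hx]; exact ⟨_, hasShift_aZ _⟩

lemma GGS_le_SG2 : GGS p e ≤ SG2 p := by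
  rw [GGS]
  rw [Subgroup.closure_le]
  rintro f (rfl | rfl)
  · exact aA_mem_SG2
  · exact bA_mem_SG2

lemma good1_of_SG2 {f : ↥(AutT p)} (hf : f ∈ SG2 p) : Good1 f := hf.1

lemma good1_sec_of_SG2 {f : ↥(AutT p)} (hf : f ∈ SG2 p) (x : ZMod p) : Good1 (sec f x) := hf.2 x

/-- `sval f = ∑ₓ sh (f_x)`, the total shift of the first-level sections. -/
def sval (f : ↥(AutT p)) : ZMod p := ∑ x : ZMod p, sh (sec f x)

lemma sval_mul {f g : ↥(AutT p)} (hf : f ∈ SG2 p) (hg : g ∈ SG2 p) :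
    sval (f * g) = sval f + sval g := by
  obtain ⟨hf1, hf2⟩ := hf
  obtain ⟨hg1, hg2⟩ := hg
  unfold sval
  have h1 : ∀ x : ZMod p, sh (sec (f * g) x) = sh (sec f (x + sh g)) + sh (sec g x) := by
    intro x
    rw [sec_mul f (good1_shift hg1) x, sh_mul (hf2 _) (hg2 x)]
  rw [Finset.sum_congr rfl (fun x _ => h1 x), Finset.sum_add_distrib]
  congr 1
  exact Fintype.sum_bijective (fun x => x + sh g)
    (Equiv.addRight (sh g)).bijective _ _ (fun x => rfl)

lemma sh_one : sh (1 : ↥(AutT p)) = 0 := sh_eq hasShift_one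

lemma sval_one : sval (1 : ↥(AutT p)) = 0 := by
  unfold sval
  rw [Finset.sum_congr rfl (fun x _ => by rw [sec_one, sh_one]), Finset.sum_const,
    smul_zero]

lemma sval_inv {f : ↥(AutT p)} (hf : f ∈ SG2 p) : sval f⁻¹ = -sval f := by
  have := sval_mul hf ((SG2 p).inv_mem hf)
  rw [mul_inv_cancel, sval_one] at this
  linear_combination -this

lemma sval_aZ (c : ZMod p) : sval (aZ p c) = 0 := by
  unfold sval
  rw [Finset.sum_congr rfl (fun x _ => by rw [sec_aZ, sh_one]), Finset.sum_const, smul_zero]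

lemma zmod_sum_dite {M : Type*} [AddCommMonoid M] (c : M) (G : Fin (p - 1) → M) :
    ∑ x : ZMod p, (if hx : x.val = 0 then c else G (eIdx x hx)) = c + ∑ i, G i := by
  rw [← Finset.add_sum_erase Finset.univ _ (Finset.mem_univ (0 : ZMod p))]
  congr 1
  · rw [dif_pos ZMod.val_zero]
  · refine Finset.sum_bij' (fun x hx => eIdx x ?_)
      (fun i _ => (((i : ℕ) + 1 : ℕ) : ZMod p)) ?_ ?_ ?_ ?_ ?_
    · exact fun h => (Finset.ne_of_mem_erase hx) ((ZMod.val_eq_zero x).mp h)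
    · intro a ha
      exact Finset.mem_univ _
    · intro i _
      have hlt : (i : ℕ) + 1 < p := by have := i.isLt; omega
      refine Finset.mem_erase.mpr ⟨?_, Finset.mem_univ _⟩
      intro h0
      have h0' : ((((i : ℕ) + 1 : ℕ)) : ZMod p) = 0 := h0
      have := ZMod.val_cast_of_lt hlt
      rw [h0', ZMod.val_zero] at this
      omega
    · intro x hx
      have hxne : x.val ≠ 0 := fun h => (Finset.ne_of_mem_erase hx) ((ZMod.val_eq_zero x).mp h)
      show ((((eIdx x _ : Fin (p - 1)) : ℕ) + 1 : ℕ) : ZMod p) = x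
      have h2 : ((eIdx x hxne : Fin (p - 1)) : ℕ) + 1 = x.val := by
        show x.val - 1 + 1 = x.val
        omega
      rw [h2, ZMod.natCast_val, ZMod.cast_id]
    · intro i _
      have hlt : (i : ℕ) + 1 < p := by have := i.isLt; omega
      apply Fin.ext
      show (((((i : ℕ) + 1 : ℕ)) : ZMod p)).val - 1 = (i : ℕ)
      rw [ZMod.val_cast_of_lt hlt]
      omega
    · intro x hx
      have hxne : x.val ≠ 0 := fun h => (Finset.ne_of_mem_erase hx) ((ZMod.val_eq_zero x).mp h)
      rw [dif_neg hxne]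

lemma sval_bZ (β : ZMod p) : sval (bZ p e β) = β * ∑ i, e i := by
  unfold sval
  have h1 : ∀ x : ZMod p, sh (sec (bZ p e β) x)
      = if hx : x.val = 0 then (0 : ZMod p) else β * e (eIdx x hx) := by
    intro x
    rw [sec_bZ]
    by_cases hx : x.val = 0
    · rw [dif_pos hx, dif_pos hx, sh_eq (hasShift_bZ β)]
    · rw [dif_neg hx, dif_neg hx, sh_eq (hasShift_aZ _)]
  rw [Finset.sum_congr rfl (fun x _ => h1 x),
    zmod_sum_dite (0 : ZMod p) (fun i => β * e i), zero_add, Finset.mul_sum]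

end Aux3
section Aux4

set_option linter.unusedSectionVars false

variable {p : ℕ} [Fact p.Prime] {e : Fin (p - 1) → ZMod p}

/-- The product `∏ (b^{βᵢ} a^{αᵢ})` encoded by a list of pairs `(βᵢ, αᵢ)`. -/
def wprod (p : ℕ) [Fact p.Prime] (e : Fin (p - 1) → ZMod p)
    (L : List (ZMod p × ZMod p)) : ↥(AutT p) :=
  (L.map fun q => bZ p e q.1 * aZ p q.2).prod

lemma wprod_nil : wprod p e [] = 1 := rfl

lemma wprod_cons (q : ZMod p × ZMod p) (L : List (ZMod p × ZMod p)) :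
    wprod p e (q :: L) = bZ p e q.1 * aZ p q.2 * wprod p e L := by
  rw [wprod, List.map_cons, List.prod_cons, wprod]

lemma wprod_append (L M : List (ZMod p × ZMod p)) :
    wprod p e (L ++ M) = wprod p e L * wprod p e M := by
  rw [wprod, List.map_append, List.prod_append, wprod, wprod]

lemma wprod_mem (L : List (ZMod p × ZMod p)) : wprod p e L ∈ GGS p e := by
  refine Subgroup.list_prod_mem _ ?_
  intro x hx
  rw [List.mem_map] at hx
  obtain ⟨q, _, rfl⟩ := hx
  exact mul_mem (bZ_mem q.1) (aZ_mem q.2)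

/-- Sum of the `a`-exponents of a word. -/
def Asum {p : ℕ} (L : List (ZMod p × ZMod p)) : ZMod p := (L.map Prod.snd).sum

/-- Sum of the `b`-exponents of a word. -/
def Bsum {p : ℕ} (L : List (ZMod p × ZMod p)) : ZMod p := (L.map Prod.fst).sum

lemma Asum_cons (q : ZMod p × ZMod p) (L : List (ZMod p × ZMod p)) :
    Asum (q :: L) = q.2 + Asum L := by
  rw [Asum, List.map_cons, List.sum_cons, Asum]

lemma Bsum_cons (q : ZMod p × ZMod p) (L : List (ZMod p × ZMod p)) :
    Bsum (q :: L) = q.1 + Bsum L := by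
  rw [Bsum, List.map_cons, List.sum_cons, Bsum]

lemma hasShift_wprod (L : List (ZMod p × ZMod p)) : HasShift (wprod p e L) (Asum L) := by
  induction L with
  | nil => exact hasShift_one
  | cons q L ih =>
    rw [wprod_cons, mul_assoc, Asum_cons]
    have := hasShift_mul (hasShift_bZ (e := e) q.1) (hasShift_mul (hasShift_aZ q.2) ih)
    rwa [zero_add] at this

lemma sval_wprod (L : List (ZMod p × ZMod p)) :
    sval (wprod p e L) = Bsum L * ∑ i, e i := by
  induction L with
  | nil => rw [wprod_nil, sval_one, Bsum, List.map_nil, List.sum_nil, zero_mul]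
  | cons q L ih =>
    have m1 : bZ p e q.1 ∈ SG2 p := GGS_le_SG2 (bZ_mem q.1)
    have m2 : aZ p q.2 ∈ SG2 p := GGS_le_SG2 (e := e) (aZ_mem q.2)
    have m3 : wprod p e L ∈ SG2 p := GGS_le_SG2 (wprod_mem L)
    rw [wprod_cons, sval_mul (mul_mem m1 m2) m3, sval_mul m1 m2, sval_bZ, sval_aZ, ih,
      Bsum_cons, add_zero, add_mul]

/-- Conversion between the `Fin`-indexed representations in `glen` and list words. -/
lemma glen_set_iff (g : ↥(AutT p)) (m : ℕ) :
    (∃ (α : Fin (m + 1) → ZMod p) (β : Fin m → ZMod p),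
        g = aZ p (α 0) * (List.ofFn fun i : Fin m => bZ p e (β i) * aZ p (α i.succ)).prod)
      ↔ ∃ α₀ L, L.length = m ∧ g = aZ p α₀ * wprod p e L := by
  constructor
  · rintro ⟨α, β, rfl⟩
    refine ⟨α 0, List.ofFn (fun i => (β i, α i.succ)), by simp, ?_⟩
    rw [wprod, List.map_ofFn]
    rfl
  · rintro ⟨α₀, L, rfl, rfl⟩
    refine ⟨Fin.cases α₀ (fun i => (L.get i).2), fun i => (L.get i).1, ?_⟩
    simp only [Fin.cases_zero, Fin.cases_succ]
    congr 1
    conv_lhs => rw [wprod, ← List.ofFn_getElem (xs := L), List.map_ofFn]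
    try congr 1
    try funext i
    try simp [Function.comp, List.get_eq_getElem]

lemma glen_le_of_rep {g : ↥(AutT p)} (α₀ : ZMod p) (L : List (ZMod p × ZMod p))
    (hrep : g = aZ p α₀ * wprod p e L) : glen p e g ≤ L.length :=
  Nat.sInf_le ((glen_set_iff g L.length).mpr ⟨α₀, L, rfl, hrep⟩)

lemma exists_min_rep {g : ↥(AutT p)}
    (hex : ∃ α₀ L, g = aZ p α₀ * wprod p e L) :
    ∃ α₀ L, g = aZ p α₀ * wprod p e L ∧ L.length = glen p e g := by
  obtain ⟨α₀, L, hrep⟩ := hex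
  have hne : {m : ℕ | ∃ (α : Fin (m + 1) → ZMod p) (β : Fin m → ZMod p),
      g = aZ p (α 0) * (List.ofFn fun i : Fin m => bZ p e (β i) * aZ p (α i.succ)).prod}.Nonempty :=
    ⟨L.length, (glen_set_iff g L.length).mpr ⟨α₀, L, rfl, hrep⟩⟩
  have hmem := Nat.sInf_mem hne
  obtain ⟨α₀', L', hlen, hrep'⟩ := (glen_set_iff g _).mp hmem
  exact ⟨α₀', L', hrep', hlen⟩

lemma wprod_mul_aZ (L : List (ZMod p × ZMod p)) (c : ZMod p) :
    ∃ d M, M.length = L.length ∧ wprod p e L * aZ p c = aZ p d * wprod p e M := by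
  induction L with
  | nil => exact ⟨c, [], rfl, by rw [wprod_nil, one_mul, mul_one]⟩
  | cons q L ih =>
    obtain ⟨d, M, hlen, hM⟩ := ih
    refine ⟨0, (q.1, q.2 + d) :: M, by simp [hlen], ?_⟩
    rw [wprod_cons, wprod_cons, aZ_zero, one_mul, aZ_add]
    calc bZ p e q.1 * aZ p q.2 * wprod p e L * aZ p c
        = bZ p e q.1 * aZ p q.2 * (wprod p e L * aZ p c) := by group
      _ = bZ p e q.1 * aZ p q.2 * (aZ p d * wprod p e M) := by rw [hM]
      _ = bZ p e q.1 * (aZ p q.2 * aZ p d) * wprod p e M := by group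

lemma wprod_inv (L : List (ZMod p × ZMod p)) :
    ∃ d M, M.length = L.length ∧ (wprod p e L)⁻¹ = aZ p d * wprod p e M := by
  induction L with
  | nil => exact ⟨0, [], rfl, by rw [wprod_nil, inv_one, aZ_zero, one_mul]⟩
  | cons q L ih =>
    obtain ⟨d, M, hlen, hM⟩ := ih
    obtain ⟨d', M', hlen', hM'⟩ := wprod_mul_aZ M (-q.2)
    refine ⟨d + d', M' ++ [(-q.1, 0)], by simp [hlen', hlen], ?_⟩
    rw [wprod_cons, wprod_append]
    have h1 : wprod p e [(-q.1, 0)] = bZ p e (-q.1) := by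
      rw [wprod_cons, wprod_nil, aZ_zero, mul_one, mul_one]
    rw [h1, mul_inv_rev, mul_inv_rev, hM, ← aZ_neg, ← bZ_neg, aZ_add]
    calc aZ p d * wprod p e M * aZ p (-q.2) * bZ p e (-q.1)
        = aZ p d * (wprod p e M * aZ p (-q.2)) * bZ p e (-q.1) := by group
      _ = aZ p d * (aZ p d' * wprod p e M') * bZ p e (-q.1) := by rw [hM']
      _ = aZ p d * aZ p d' * (wprod p e M' * bZ p e (-q.1)) := by group

lemma ggs_rep {g : ↥(AutT p)} (hg : g ∈ GGS p e) :
    ∃ α₀ L, g = aZ p α₀ * wprod p e L := by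
  rw [GGS] at hg
  induction hg using Subgroup.closure_induction with
  | mem x hx =>
    rcases hx with rfl | rfl
    · exact ⟨1, [], by rw [wprod_nil, mul_one, aZ_one]⟩
    · refine ⟨0, [(1, 0)], ?_⟩
      rw [wprod_cons, wprod_nil, aZ_zero, bZ_one, mul_one, one_mul, mul_one]
  | one => exact ⟨0, [], by rw [wprod_nil, mul_one, aZ_zero]⟩
  | mul x y _ _ ihx ihy =>
    obtain ⟨a, L, rfl⟩ := ihx
    obtain ⟨a', L', rfl⟩ := ihy
    obtain ⟨d, M, _, hM⟩ := wprod_mul_aZ (e := e) L a'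
    refine ⟨a + d, M ++ L', ?_⟩
    rw [wprod_append, aZ_add]
    calc aZ p a * wprod p e L * (aZ p a' * wprod p e L')
        = aZ p a * (wprod p e L * aZ p a') * wprod p e L' := by group
      _ = aZ p a * (aZ p d * wprod p e M) * wprod p e L' := by rw [hM]
      _ = aZ p a * aZ p d * (wprod p e M * wprod p e L') := by group
  | inv x _ ihx =>
    obtain ⟨a, L, rfl⟩ := ihx
    obtain ⟨d, M, _, hM⟩ := wprod_inv (e := e) L
    obtain ⟨d', M', _, hM'⟩ := wprod_mul_aZ (e := e) M (-a)
    refine ⟨d + d', M', ?_⟩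
    rw [mul_inv_rev, hM, ← aZ_neg, aZ_add]
    calc aZ p d * wprod p e M * aZ p (-a)
        = aZ p d * (wprod p e M * aZ p (-a)) := by group
      _ = aZ p d * (aZ p d' * wprod p e M') := by rw [hM']
      _ = aZ p d * aZ p d' * wprod p e M' := by group

end Aux4
section Aux5

set_option linter.unusedSectionVars false

variable {p : ℕ} [Fact p.Prime] {e : Fin (p - 1) → ZMod p}

lemma sec_aZ_mul (c : ZMod p) (f : ↥(AutT p)) (hf : Good1 f) (x : ZMod p) :
    sec (aZ p c * f) x = sec f x := by
  rw [sec_mul (aZ p c) (good1_shift hf) x, sec_aZ, one_mul]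

lemma sec_wprod_cons (q : ZMod p × ZMod p) (L : List (ZMod p × ZMod p)) (x : ZMod p) :
    sec (wprod p e (q :: L)) x
      = (if hx : (x + (q.2 + Asum L)).val = 0 then bZ p e q.1
          else aZ p (q.1 * e (eIdx _ hx))) * sec (wprod p e L) x := by
  rw [wprod_cons, mul_assoc,
    sec_mul (bZ p e q.1) (hasShift_mul (hasShift_aZ q.2) (hasShift_wprod L)) x,
    sec_mul (aZ p q.2) (hasShift_wprod L) x, sec_aZ, one_mul, sec_bZ]

lemma sec_rep (L : List (ZMod p × ZMod p)) :
    ∃ N : ZMod p → ℕ, (∑ x : ZMod p, N x) = L.length ∧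
      ∀ x, ∃ α₀ M, sec (wprod p e L) x = aZ p α₀ * wprod p e M ∧ M.length = N x := by
  induction L with
  | nil =>
    exact ⟨fun _ => 0, by simp, fun x =>
      ⟨0, [], by simp [wprod_nil, sec_one, aZ_zero], rfl⟩⟩
  | cons q L ih =>
    obtain ⟨N, hN, hrep⟩ := ih
    refine ⟨fun x => N x + (if x = -(q.2 + Asum L) then 1 else 0), ?_, ?_⟩
    · rw [Finset.sum_add_distrib, hN, Finset.sum_ite_eq' Finset.univ (-(q.2 + Asum L))
        (fun _ => 1), if_pos (Finset.mem_univ _)]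
      simp
    · intro x
      obtain ⟨α₀, M, hsec, hlen⟩ := hrep x
      rw [sec_wprod_cons, hsec]
      by_cases hc : (x + (q.2 + Asum L)).val = 0
      · have hx0 : x = -(q.2 + Asum L) := by
          have := (ZMod.val_eq_zero _).mp hc
          linear_combination this
        refine ⟨0, (q.1, α₀) :: M, ?_, by simp [hlen, hx0]⟩
        rw [dif_pos hc, wprod_cons, aZ_zero]
        group
      · have hx0 : ¬(x = -(q.2 + Asum L)) := by
          intro hx
          apply hc
          rw [ZMod.val_eq_zero]
          rw [hx]
          ring
        refine ⟨q.1 * e (eIdx _ hc) + α₀, M, ?_, by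
          show M.length = N x + if x = -(q.2 + Asum L) then 1 else 0
          rw [hlen, if_neg hx0, add_zero]⟩
        rw [dif_neg hc, aZ_add]
        group

lemma sec_wprod_mem (L : List (ZMod p × ZMod p)) (x : ZMod p) :
    sec (wprod p e L) x ∈ GGS p e := by
  obtain ⟨N, _, hrep⟩ := sec_rep (e := e) L
  obtain ⟨α₀, M, hsec, _⟩ := hrep x
  rw [hsec]
  exact mul_mem (aZ_mem α₀) (wprod_mem M)

lemma sum_sec_sh (L : List (ZMod p × ZMod p)) :
    ∑ x : ZMod p, sh (sec (wprod p e L) x) = Bsum L * ∑ i, e i := by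
  induction L with
  | nil =>
    rw [Bsum, List.map_nil, List.sum_nil, zero_mul]
    rw [Finset.sum_congr rfl (fun x _ => by rw [wprod_nil, sec_one, sh_one]),
      Finset.sum_const, smul_zero]
  | cons q L ih =>
    have hgood : ∀ y : ZMod p,
        Good1 (if hx : y.val = 0 then bZ p e q.1 else aZ p (q.1 * e (eIdx _ hx))) := by
      intro y
      by_cases hx : y.val = 0
      · rw [dif_pos hx]; exact ⟨0, hasShift_bZ q.1⟩
      · rw [dif_neg hx]; exact ⟨_, hasShift_aZ _⟩
    have h1 : ∀ x : ZMod p, sh (sec (wprod p e (q :: L)) x)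
        = sh (if hx : (x + (q.2 + Asum L)).val = 0 then bZ p e q.1
            else aZ p (q.1 * e (eIdx _ hx))) + sh (sec (wprod p e L) x) := by
      intro x
      rw [sec_wprod_cons, sh_mul (hgood _) ((GGS_le_SG2 (wprod_mem L)).2 x)]
    rw [Finset.sum_congr rfl (fun x _ => h1 x), Finset.sum_add_distrib, ih]
    have h2 : ∑ x : ZMod p, sh (if hx : (x + (q.2 + Asum L)).val = 0 then bZ p e q.1
        else aZ p (q.1 * e (eIdx _ hx))) = q.1 * ∑ i, e i := by
      rw [Fintype.sum_bijective (fun x : ZMod p => x + (q.2 + Asum L))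
        (Equiv.addRight (q.2 + Asum L)).bijective _
        (fun y => sh (if hx : y.val = 0 then bZ p e q.1 else aZ p (q.1 * e (eIdx _ hx))))
        (fun x => rfl)]
      have h3 : ∀ y : ZMod p, sh (if hx : y.val = 0 then bZ p e q.1
          else aZ p (q.1 * e (eIdx _ hx)))
          = if hx : y.val = 0 then (0 : ZMod p) else q.1 * e (eIdx _ hx) := by
        intro y
        by_cases hx : y.val = 0
        · rw [dif_pos hx, dif_pos hx, sh_eq (hasShift_bZ q.1)]
        · rw [dif_neg hx, dif_neg hx, sh_eq (hasShift_aZ _)]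
      rw [Finset.sum_congr rfl (fun y _ => h3 y),
        zmod_sum_dite (0 : ZMod p) (fun i => q.1 * e i), zero_add, Finset.mul_sum]
    rw [h2, Bsum_cons, add_mul]

lemma sum_sec_sval (L : List (ZMod p × ZMod p)) :
    ∑ x : ZMod p, sval (sec (wprod p e L) x) = Bsum L * ∑ i, e i := by
  induction L with
  | nil =>
    rw [Bsum, List.map_nil, List.sum_nil, zero_mul]
    rw [Finset.sum_congr rfl (fun x _ => by rw [wprod_nil, sec_one, sval_one]),
      Finset.sum_const, smul_zero]
  | cons q L ih =>
    have hmem : ∀ y : ZMod p,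
        (if hx : y.val = 0 then bZ p e q.1 else aZ p (q.1 * e (eIdx _ hx))) ∈ SG2 p := by
      intro y
      by_cases hx : y.val = 0
      · rw [dif_pos hx]; exact GGS_le_SG2 (bZ_mem q.1)
      · rw [dif_neg hx]; exact GGS_le_SG2 (e := e) (aZ_mem _)
    have h1 : ∀ x : ZMod p, sval (sec (wprod p e (q :: L)) x)
        = sval (if hx : (x + (q.2 + Asum L)).val = 0 then bZ p e q.1
            else aZ p (q.1 * e (eIdx _ hx))) + sval (sec (wprod p e L) x) := by
      intro x
      rw [sec_wprod_cons, sval_mul (hmem _) (GGS_le_SG2 (sec_wprod_mem L x))]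
    rw [Finset.sum_congr rfl (fun x _ => h1 x), Finset.sum_add_distrib, ih]
    have h2 : ∑ x : ZMod p, sval (if hx : (x + (q.2 + Asum L)).val = 0 then bZ p e q.1
        else aZ p (q.1 * e (eIdx _ hx))) = q.1 * ∑ i, e i := by
      rw [Fintype.sum_bijective (fun x : ZMod p => x + (q.2 + Asum L))
        (Equiv.addRight (q.2 + Asum L)).bijective _
        (fun y => sval (if hx : y.val = 0 then bZ p e q.1 else aZ p (q.1 * e (eIdx _ hx))))
        (fun x => rfl)]
      have h3 : ∀ y : ZMod p, sval (if hx : y.val = 0 then bZ p e q.1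
          else aZ p (q.1 * e (eIdx _ hx)))
          = if hx : y.val = 0 then q.1 * ∑ i, e i else (0 : ZMod p) := by
        intro y
        by_cases hx : y.val = 0
        · rw [dif_pos hx, dif_pos hx, sval_bZ]
        · rw [dif_neg hx, dif_neg hx, sval_aZ]
      rw [Finset.sum_congr rfl (fun y _ => h3 y),
        zmod_sum_dite (q.1 * ∑ i, e i) (fun _ => (0 : ZMod p)), Finset.sum_const, smul_zero,
        add_zero]
    rw [h2, Bsum_cons, add_mul]

end Aux5
section Aux6

open scoped commutatorElement

set_option linter.unusedSectionVars false

variable {p : ℕ} [Fact p.Prime] {e : Fin (p - 1) → ZMod p}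

/-- Congruence modulo the commutator subgroup `G' = ⁅G, G⁆`. -/
def Cong (p : ℕ) [Fact p.Prime] (e : Fin (p - 1) → ZMod p) (g h : ↥(AutT p)) : Prop :=
  g * h⁻¹ ∈ ⁅GGS p e, GGS p e⁆

lemma K_le_GGS : ⁅GGS p e, GGS p e⁆ ≤ GGS p e := by
  rw [Subgroup.commutator_le]
  intro g1 h1 g2 h2
  rw [commutatorElement_def]
  exact mul_mem (mul_mem (mul_mem h1 h2) (inv_mem h1)) (inv_mem h2)

lemma conj_mem_K {g k : ↥(AutT p)} (hg : g ∈ GGS p e) (hk : k ∈ ⁅GGS p e, GGS p e⁆) :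
    g * k * g⁻¹ ∈ ⁅GGS p e, GGS p e⁆ := by
  have h1 : g * k * g⁻¹ = ⁅g, k⁆ * k := by rw [commutatorElement_def]; group
  rw [h1]
  exact mul_mem (Subgroup.commutator_mem_commutator hg (K_le_GGS hk)) hk

lemma cong_refl (g : ↥(AutT p)) : Cong p e g g := by
  show g * g⁻¹ ∈ _
  rw [mul_inv_cancel]
  exact one_mem _

lemma cong_symm {g h : ↥(AutT p)} (hc : Cong p e g h) : Cong p e h g := by
  show h * g⁻¹ ∈ _
  have : h * g⁻¹ = (g * h⁻¹)⁻¹ := by group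
  rw [this]
  exact inv_mem hc

lemma cong_trans {g h k : ↥(AutT p)} (h1 : Cong p e g h) (h2 : Cong p e h k) :
    Cong p e g k := by
  show g * k⁻¹ ∈ _
  have : g * k⁻¹ = (g * h⁻¹) * (h * k⁻¹) := by group
  rw [this]
  exact mul_mem h1 h2

lemma cong_mul {g₁ g₂ h₁ h₂ : ↥(AutT p)} (hg₁ : g₁ ∈ GGS p e)
    (c₁ : Cong p e g₁ h₁) (c₂ : Cong p e g₂ h₂) : Cong p e (g₁ * g₂) (h₁ * h₂) := by
  show g₁ * g₂ * (h₁ * h₂)⁻¹ ∈ _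
  have : g₁ * g₂ * (h₁ * h₂)⁻¹ = (g₁ * (g₂ * h₂⁻¹) * g₁⁻¹) * (g₁ * h₁⁻¹) := by group
  rw [this]
  exact mul_mem (conj_mem_K hg₁ c₂) c₁

lemma cong_inv {g h : ↥(AutT p)} (hg : g ∈ GGS p e) (hc : Cong p e g h) :
    Cong p e g⁻¹ h⁻¹ := by
  show g⁻¹ * h⁻¹⁻¹ ∈ _
  have : g⁻¹ * h⁻¹⁻¹ = g⁻¹ * (g * h⁻¹)⁻¹ * g := by group
  rw [this]
  have := conj_mem_K (inv_mem hg) (inv_mem hc)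
  rwa [inv_inv] at this

lemma cong_abab (A B A' B' : ZMod p) :
    Cong p e ((aZ p A * bZ p e B) * (aZ p A' * bZ p e B'))
      (aZ p (A + A') * bZ p e (B + B')) := by
  show _ * _ ∈ _
  have h1 : (aZ p A * bZ p e B) * (aZ p A' * bZ p e B') * (aZ p (A + A') * bZ p e (B + B'))⁻¹
      = aZ p A * ⁅bZ p e B, aZ p A'⁆ * (aZ p A)⁻¹ := by
    rw [commutatorElement_def, aZ_add, bZ_add]
    group
  rw [h1]
  exact conj_mem_K (aZ_mem A)
    (Subgroup.commutator_mem_commutator (bZ_mem B) (aZ_mem A'))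

lemma cong_ab_exists {w : ↥(AutT p)} (hw : w ∈ GGS p e) :
    ∃ A B, Cong p e w (aZ p A * bZ p e B) := by
  rw [GGS] at hw
  induction hw using Subgroup.closure_induction with
  | mem x hx =>
    rcases hx with rfl | rfl
    · refine ⟨1, 0, ?_⟩
      rw [bZ_zero, mul_one, aZ_one]
      exact cong_refl _
    · refine ⟨0, 1, ?_⟩
      rw [aZ_zero, one_mul, bZ_one]
      exact cong_refl _
  | one =>
    refine ⟨0, 0, ?_⟩
    rw [aZ_zero, bZ_zero, one_mul]
    exact cong_refl _
  | mul x y hx hy ihx ihy =>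
    obtain ⟨A, B, hAB⟩ := ihx
    obtain ⟨A', B', hAB'⟩ := ihy
    exact ⟨A + A', B + B', cong_trans (cong_mul hx hAB hAB') (cong_abab A B A' B')⟩
  | inv x hx ihx =>
    obtain ⟨A, B, hAB⟩ := ihx
    refine ⟨-A, -B, ?_⟩
    have h1 := cong_inv hx hAB
    have h2 : (aZ p A * bZ p e B)⁻¹ = bZ p e (-B) * aZ p (-A) := by
      rw [bZ_neg, aZ_neg, mul_inv_rev]
    rw [h2] at h1
    refine cong_trans h1 ?_
    show _ * _ ∈ _
    have h3 : (bZ p e (-B) * aZ p (-A)) * (aZ p (-A) * bZ p e (-B))⁻¹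
        = ⁅bZ p e (-B), aZ p (-A)⁆ := by rw [commutatorElement_def]; group
    rw [h3]
    exact Subgroup.commutator_mem_commutator (bZ_mem (-B)) (aZ_mem (-A))

/-- `Hker`: shift-0, `sval`-0 elements of `SG2`; contains all commutators. -/
def Hker (p : ℕ) [Fact p.Prime] : Subgroup ↥(AutT p) where
  carrier := {f | f ∈ SG2 p ∧ HasShift f 0 ∧ sval f = 0}
  one_mem' := ⟨one_mem _, hasShift_one, sval_one⟩
  mul_mem' := by
    rintro a b ⟨ha2, has, hav⟩ ⟨hb2, hbs, hbv⟩
    refine ⟨mul_mem ha2 hb2, ?_, by rw [sval_mul ha2 hb2, hav, hbv, add_zero]⟩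
    have := hasShift_mul has hbs
    rwa [add_zero] at this
  inv_mem' := by
    rintro a ⟨ha2, has, hav⟩
    refine ⟨inv_mem ha2, ?_, by rw [sval_inv ha2, hav, neg_zero]⟩
    have := hasShift_inv has
    rwa [neg_zero] at this

lemma K_le_Hker : ⁅GGS p e, GGS p e⁆ ≤ Hker p := by
  rw [Subgroup.commutator_le]
  intro g1 h1 g2 h2
  have m1 : g1 ∈ SG2 p := GGS_le_SG2 h1
  have m2 : g2 ∈ SG2 p := GGS_le_SG2 h2
  have s1 := good1_shift m1.1
  have s2 := good1_shift m2.1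
  refine ⟨?_, ?_, ?_⟩
  · rw [commutatorElement_def]
    exact mul_mem (mul_mem (mul_mem m1 m2) (inv_mem m1)) (inv_mem m2)
  · rw [commutatorElement_def]
    have := hasShift_mul (hasShift_mul (hasShift_mul s1 s2) (hasShift_inv s1))
      (hasShift_inv s2)
    have heq : sh g1 + sh g2 + -sh g1 + -sh g2 = 0 := by ring
    rwa [heq] at this
  · rw [commutatorElement_def, sval_mul (mul_mem (mul_mem m1 m2) (inv_mem m1)) (inv_mem m2),
      sval_mul (mul_mem m1 m2) (inv_mem m1), sval_mul m1 m2, sval_inv m1, sval_inv m2]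
    ring

lemma cong_values {w : ↥(AutT p)} {A B : ZMod p} (hw : w ∈ GGS p e)
    (hc : Cong p e w (aZ p A * bZ p e B)) :
    sh w = A ∧ sval w = B * ∑ i, e i := by
  have hk := K_le_Hker hc
  obtain ⟨hk2, hks, hkv⟩ := hk
  have hab2 : aZ p A * bZ p e B ∈ SG2 p :=
    GGS_le_SG2 (mul_mem (aZ_mem A) (bZ_mem B))
  have hw_eq : w = (w * (aZ p A * bZ p e B)⁻¹) * (aZ p A * bZ p e B) := by group
  constructor
  · rw [hw_eq, sh_mul ⟨0, hks⟩ hab2.1, sh_eq hks,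
      sh_mul (GGS_le_SG2 (e := e) (aZ_mem A)).1 (GGS_le_SG2 (bZ_mem B)).1,
      sh_eq (hasShift_aZ A), sh_eq (hasShift_bZ B)]
    ring
  · rw [hw_eq, sval_mul ⟨hk2.1, hk2.2⟩ hab2, hkv,
      sval_mul (GGS_le_SG2 (e := e) (aZ_mem A)) (GGS_le_SG2 (bZ_mem B)), sval_aZ, sval_bZ]
    ring

lemma cong_list_prod (l : List (↥(AutT p))) (hl : ∀ z ∈ l, z ∈ GGS p e) :
    ∃ SA SB, Cong p e l.prod (aZ p SA * bZ p e SB) := by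
  induction l with
  | nil =>
    refine ⟨0, 0, ?_⟩
    rw [List.prod_nil, aZ_zero, bZ_zero, one_mul]
    exact cong_refl _
  | cons z l ih =>
    obtain ⟨SA, SB, hSB⟩ := ih (fun w hw => hl w (List.mem_cons_of_mem z hw))
    obtain ⟨A, B, hAB⟩ := cong_ab_exists (hl z (List.mem_cons_self))
    refine ⟨A + SA, B + SB, ?_⟩
    rw [List.prod_cons]
    exact cong_trans (cong_mul (hl z (List.mem_cons_self)) hAB hSB) (cong_abab A B SA SB)

lemma sh_list_prod (l : List (↥(AutT p))) (hl : ∀ z ∈ l, z ∈ SG2 p) :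
    sh l.prod = (l.map sh).sum := by
  induction l with
  | nil => rw [List.prod_nil, List.map_nil, List.sum_nil, sh_one]
  | cons z l ih =>
    rw [List.prod_cons, List.map_cons, List.sum_cons,
      sh_mul (hl z (List.mem_cons_self)).1
        (Subgroup.list_prod_mem _ (fun w hw => hl w (List.mem_cons_of_mem z hw)) : _ ∈ SG2 p).1,
      ih (fun w hw => hl w (List.mem_cons_of_mem z hw))]

lemma sval_list_prod (l : List (↥(AutT p))) (hl : ∀ z ∈ l, z ∈ SG2 p) :
    sval l.prod = (l.map sval).sum := by
  induction l with
  | nil => rw [List.prod_nil, List.map_nil, List.sum_nil, sval_one]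
  | cons z l ih =>
    rw [List.prod_cons, List.map_cons, List.sum_cons,
      sval_mul (hl z (List.mem_cons_self))
        (Subgroup.list_prod_mem _ (fun w hw => hl w (List.mem_cons_of_mem z hw))),
      ih (fun w hw => hl w (List.mem_cons_of_mem z hw))]

end Aux6
section Aux7

set_option linter.unusedSectionVars false

variable {p : ℕ} [Fact p.Prime] {e : Fin (p - 1) → ZMod p}

lemma sec_pow {g h : ↥(AutT p)} {c : ZMod p} (hc : HasShift g c)
    (hsec : ∀ y, sec g y = sec h y) (n : ℕ) (u : ZMod p) :
    sec (g ^ n) u = ((List.range n).reverse.map (fun k => sec h (u + (k : ℕ) • c))).prod := by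
  induction n with
  | zero => simp [sec_one]
  | succ n ih =>
    rw [pow_succ', sec_mul g (hasShift_pow hc n) u, ih, hsec,
      List.range_succ, List.reverse_append]
    simp only [List.reverse_cons, List.reverse_nil, List.nil_append, List.singleton_append,
      List.map_cons, List.prod_cons]

lemma list_rev_map_sum {α : Type*} {M : Type*} [AddCommMonoid M] (l : List α) (f : α → M) :
    (l.reverse.map f).sum = (l.map f).sum := by
  rw [List.map_reverse, List.sum_reverse]

lemma list_range_map_sum {M : Type*} [AddCommMonoid M] (n : ℕ) (f : ℕ → M) :
    ((List.range n).map f).sum = ∑ k : Fin n, f k := by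
  induction n with
  | zero => simp
  | succ n ih =>
    rw [List.range_succ, List.map_append, List.sum_append, ih, Fin.sum_univ_castSucc]
    simp

lemma fin_sum_shift {M : Type*} [AddCommMonoid M] (F : ZMod p → M) (u i : ZMod p)
    (hi : i ≠ 0) :
    ∑ k : Fin p, F (u + (k : ℕ) • i) = ∑ x : ZMod p, F x := by
  apply Fintype.sum_bijective (fun k : Fin p => u + (k : ℕ) • i) ?_ _ _ (fun x => rfl)
  rw [Fintype.bijective_iff_injective_and_card]
  constructor
  · intro k k' hkk
    have h1 : ((k : ℕ) : ZMod p) * i = (((k' : ℕ)) : ZMod p) * i := by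
      have h2 := add_left_cancel hkk
      rwa [nsmul_eq_mul, nsmul_eq_mul] at h2
    have h3 := mul_right_cancel₀ hi h1
    apply Fin.ext
    have h4 := ZMod.val_cast_of_lt k.isLt
    have h5 := ZMod.val_cast_of_lt k'.isLt
    rw [← h4, ← h5, h3]
  · rw [Fintype.card_fin, ZMod.card]

lemma prod_rep_list (l : List (↥(AutT p))) (n : ↥(AutT p) → ℕ)
    (hl : ∀ z ∈ l, ∃ a M, z = aZ p a * wprod p e M ∧ M.length = n z) :
    ∃ a M, l.prod = aZ p a * wprod p e M ∧ M.length = (l.map n).sum := by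
  induction l with
  | nil =>
    exact ⟨0, [], by rw [List.prod_nil, wprod_nil, aZ_zero, one_mul], by simp⟩
  | cons z l ih =>
    obtain ⟨a1, M1, hz, hlen1⟩ := hl z (List.mem_cons_self)
    obtain ⟨a2, M2, hprod, hlen2⟩ := ih (fun w hw => hl w (List.mem_cons_of_mem _ hw))
    obtain ⟨d, M', hlen', hM'⟩ := wprod_mul_aZ (e := e) M1 a2
    refine ⟨a1 + d, M' ++ M2, ?_, by simp [hlen', hlen1, hlen2]⟩
    rw [List.prod_cons, hz, hprod, wprod_append, aZ_add]
    calc aZ p a1 * wprod p e M1 * (aZ p a2 * wprod p e M2)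
        = aZ p a1 * (wprod p e M1 * aZ p a2) * wprod p e M2 := by group
      _ = aZ p a1 * (aZ p d * wprod p e M') * wprod p e M2 := by rw [hM']
      _ = aZ p a1 * aZ p d * (wprod p e M' * wprod p e M2) := by group

end Aux7
/-- **Lemma 5.3.** Let `G` be a non-torsion GGS-group with `λ = e₁ + ⋯ + e_{p-1}`, and
let `g ∈ G` with `g ≡_{G'} a^i b^j`, `i ≠ 0`; write `g = a^i · ψ⁻¹((g_1, …, g_p))`
(so `g_u = φ_u(a^{-i} g)`). Then `g^p ∈ st_G(1)` and, for all `u ∈ X`,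
`φ_u(g^p) ≡_{G'} a^{λj} b^j` with `|φ_u(g^p)| ≤ |g_1| + ⋯ + |g_p| ≤ |g|`. -/
theorem ggs_power_p_propagates
    (p : ℕ) [Fact p.Prime] (hodd : Odd p)
    (e : Fin (p - 1) → ZMod p) (he : e ≠ 0) (hlam : ∑ i, e i ≠ 0)
    (g : ↥(AutT p)) (hg : g ∈ GGS p e)
    (i j : ZMod p) (hi : i ≠ 0)
    (hgij : g * (aZ p i * bZ p e j)⁻¹ ∈ ⁅GGS p e, GGS p e⁆) :
    FixesLevelOne p (g ^ p) ∧
    ∀ u : ZMod p,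
      sectionAt p (g ^ p) [u] * (aZ p ((∑ i, e i) * j) * bZ p e j)⁻¹
          ∈ ⁅GGS p e, GGS p e⁆ ∧
      glen p e (sectionAt p (g ^ p) [u])
          ≤ ∑ x : ZMod p, glen p e (sectionAt p ((aZ p i)⁻¹ * g) [x]) ∧
      (∑ x : ZMod p, glen p e (sectionAt p ((aZ p i)⁻¹ * g) [x])) ≤ glen p e g := by
  classical
  set lam := ∑ i, e i with hlamdef
  obtain ⟨hk2, hks, hkv⟩ := K_le_Hker hgij
  have hgeq : g = (g * (aZ p i * bZ p e j)⁻¹) * (aZ p i * bZ p e j) := by group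
  have hshg : HasShift g i := by
    rw [hgeq]
    have h1 := hasShift_mul hks (hasShift_mul (hasShift_aZ i) (hasShift_bZ (e := e) j))
    have h2 : (0 : ZMod p) + (i + 0) = i := by ring
    rwa [h2] at h1
  have hsvg : sval g = j * lam := by
    conv_lhs => rw [hgeq]
    rw [sval_mul hk2 (GGS_le_SG2 (mul_mem (aZ_mem i) (bZ_mem j))),
      sval_mul (GGS_le_SG2 (e := e) (aZ_mem i)) (GGS_le_SG2 (bZ_mem j)), hkv, sval_aZ, sval_bZ]
    ring
  obtain ⟨α₀, L, hrepg, hlenL⟩ := exists_min_rep (ggs_rep hg)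
  have hBL : Bsum L = j := by
    have h1 : sval g = Bsum L * lam := by
      rw [hrepg, sval_mul (GGS_le_SG2 (e := e) (aZ_mem α₀)) (GGS_le_SG2 (wprod_mem L)),
        sval_aZ, sval_wprod, zero_add]
    exact mul_right_cancel₀ hlam (h1.symm.trans hsvg)
  have hsecg : ∀ y, sec g y = sec (wprod p e L) y := by
    intro y
    rw [hrepg, sec_aZ_mul _ _ ⟨_, hasShift_wprod L⟩ y]
  have hsech : ∀ y, sec ((aZ p i)⁻¹ * g) y = sec (wprod p e L) y := by
    intro y
    rw [← aZ_neg, sec_aZ_mul _ _ ⟨i, hshg⟩ y, hsecg y]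
  have hfix : FixesLevelOne p (g ^ p) := by
    intro x
    have h1 := hasShift_pow hshg p x
    rwa [show (p • i : ZMod p) = 0 by rw [nsmul_eq_mul, ZMod.natCast_self, zero_mul],
      add_zero] at h1
  refine ⟨hfix, fun u => ?_⟩
  obtain ⟨N, hNsum, hNrep⟩ := sec_rep (e := e) L
  have hthird : (∑ x : ZMod p, glen p e (sectionAt p ((aZ p i)⁻¹ * g) [x])) ≤ glen p e g := by
    rw [← hlenL, ← hNsum]
    apply Finset.sum_le_sum
    intro x _
    obtain ⟨a, M, hsec, hlen⟩ := hNrep x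
    have hq1 : sectionAt p ((aZ p i)⁻¹ * g) [x] = aZ p a * wprod p e M := by
      rw [show sectionAt p ((aZ p i)⁻¹ * g) [x] = sec ((aZ p i)⁻¹ * g) x from rfl,
        hsech x, hsec]
    rw [← hlen]
    exact glen_le_of_rep a M hq1
  have hq : sec (g ^ p) u
      = ((List.range p).reverse.map (fun k => sec (wprod p e L) (u + (k : ℕ) • i))).prod :=
    sec_pow hshg hsecg p u
  have hsecond : glen p e (sectionAt p (g ^ p) [u])
      ≤ ∑ x : ZMod p, glen p e (sectionAt p ((aZ p i)⁻¹ * g) [x]) := by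
    have hl : ∀ z ∈ (List.range p).reverse.map
        (fun k => sec (wprod p e L) (u + (k : ℕ) • i)),
        ∃ a M, z = aZ p a * wprod p e M ∧ M.length = glen p e z := by
      intro z hz
      rw [List.mem_map] at hz
      obtain ⟨k, _, rfl⟩ := hz
      obtain ⟨a, M, hsec, _⟩ := hNrep (u + (k : ℕ) • i)
      obtain ⟨a', M', h1, h2⟩ := exists_min_rep ⟨a, M, hsec⟩
      exact ⟨a', M', h1, h2⟩
    obtain ⟨a, M, hprod, hlen⟩ := prod_rep_list _ (glen p e) hl
    have hle : glen p e (sec (g ^ p) u) ≤ M.length := by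
      rw [hq]
      exact glen_le_of_rep a M hprod
    rw [hlen] at hle
    refine le_trans hle (le_of_eq ?_)
    rw [List.map_map, list_rev_map_sum, list_range_map_sum]
    simp only [Function.comp]
    rw [fin_sum_shift (fun x => glen p e (sec (wprod p e L) x)) u i hi]
    refine Finset.sum_congr rfl fun x _ => ?_
    rw [show sectionAt p ((aZ p i)⁻¹ * g) [x] = sec ((aZ p i)⁻¹ * g) x from rfl, hsech x]
  have hmemlist : ∀ z ∈ (List.range p).reverse.map
      (fun k => sec (wprod p e L) (u + (k : ℕ) • i)), z ∈ GGS p e := by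
    intro z hz
    rw [List.mem_map] at hz
    obtain ⟨k, _, rfl⟩ := hz
    exact sec_wprod_mem L _
  obtain ⟨SA, SB, hcong⟩ := cong_list_prod _ hmemlist
  have hqmem : sec (g ^ p) u ∈ GGS p e := by
    rw [hq]
    exact Subgroup.list_prod_mem _ hmemlist
  have hcongq : Cong p e (sec (g ^ p) u) (aZ p SA * bZ p e SB) := by
    rw [show Cong p e (sec (g ^ p) u) (aZ p SA * bZ p e SB)
        = Cong p e (((List.range p).reverse.map
          (fun k => sec (wprod p e L) (u + (k : ℕ) • i))).prod) (aZ p SA * bZ p e SB)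
      from by rw [hq]]
    exact hcong
  obtain ⟨hshq, hsvq⟩ := cong_values hqmem hcongq
  have hshq2 : sh (sec (g ^ p) u) = j * lam := by
    rw [hq, sh_list_prod _ (fun z hz => GGS_le_SG2 (hmemlist z hz)), List.map_map,
      list_rev_map_sum, list_range_map_sum]
    simp only [Function.comp]
    rw [fin_sum_shift (fun x => sh (sec (wprod p e L) x)) u i hi, sum_sec_sh, hBL]
  have hsvq2 : sval (sec (g ^ p) u) = j * lam := by
    rw [hq, sval_list_prod _ (fun z hz => GGS_le_SG2 (hmemlist z hz)), List.map_map,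
      list_rev_map_sum, list_range_map_sum]
    simp only [Function.comp]
    rw [fin_sum_shift (fun x => sval (sec (wprod p e L) x)) u i hi, sum_sec_sval, hBL]
  have hSA : SA = lam * j := by
    rw [← hshq, hshq2, mul_comm]
  have hSB : SB = j := by
    apply mul_right_cancel₀ hlam
    rw [← hsvq, hsvq2]
  refine ⟨?_, hsecond, hthird⟩
  have hfinal : Cong p e (sec (g ^ p) u) (aZ p (lam * j) * bZ p e j) := by
    rw [← hSA, ← hSB]
    exact hcongq
  exact hfinal
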